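/- (Fisher consistency.) Let κ₀ > 0, let (Ω, 𝒜, ℙ) be a probability space, let X : Ω → L²([0,1]) be Borel measurable, let H : ℝ → (0,1) be strictly increasing (hence injective), and let β₀, β ∈ L²([0,1]). Define M(β, κ₀) = 𝔼[d_{κ₀}(f_{H(⟨X,β₀⟩)}, f_{H(⟨X,β⟩)})]. Then M(β₀, κ₀) = 0, M(β, κ₀) ≥ 0 for every β, and if ℙ(⟨X, β − β₀⟩ = 0) < 1 then M(β, κ₀) > 0. -/

import Mathlib

open MeasureTheory Filter Real
open scoped ENNReal BigOperators RealInnerProductSpace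

noncomputable section

/-- `L²([0,1])`, realized as the `Lp`-space of square-integrable real functions for
Lebesgue measure restricted to `[0,1]`. -/
abbrev L2 : Type := MeasureTheory.Lp ℝ 2 (MeasureTheory.volume.restrict (Set.Icc (0 : ℝ) 1))

/-- The Bernoulli density with success probability `p`. -/
def bern (p : ℝ) (y : Bool) : ℝ := if y then p else 1 - p

/-- The density power divergence between Bernoulli densities. -/
def dpd (κ p q : ℝ) : ℝ :=
  ∑ y : Bool, (bern q y ^ (1 + κ) - (1 + 1 / κ) * bern p y * bern q y ^ κ
    + (1 / κ) * bern p y ^ (1 + κ))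

lemma term_eq {κ x : ℝ} (hκ : 0 < κ) (hx : 0 < x) :
    x ^ (1+κ) - (1 + 1/κ) * x * x ^ κ + (1/κ) * x ^ (1+κ) = 0 := by
  have h : x ^ (1+κ) = x * x ^ κ := by rw [Real.rpow_add hx, Real.rpow_one]
  rw [h]; field_simp; ring

lemma term_pos {κ p q : ℝ} (hκ : 0 < κ) (hp : 0 < p) (hq : 0 < q) (hne : p ≠ q) :
    0 < q ^ (1+κ) - (1 + 1/κ) * p * q ^ κ + (1/κ) * p ^ (1+κ) := by
  have hκ' : κ ≠ 0 := hκ.ne'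
  set r : ℝ := (1+κ)/κ with hr_def
  have hr : 1 < r := by rw [hr_def, lt_div_iff₀ hκ]; linarith
  have ha : (0:ℝ) < q ^ κ := Real.rpow_pos_of_pos hq κ
  have hb : (0:ℝ) < p ^ κ := Real.rpow_pos_of_pos hp κ
  have hderiv : HasDerivAt (fun x : ℝ => x ^ r) (r * (p^κ) ^ (r-1)) (p^κ) :=
    Real.hasDerivAt_rpow_const (Or.inl hb.ne')
  have hbr1 : (p^κ) ^ (r-1) = p := by
    rw [← Real.rpow_mul hp.le]
    have : κ * (r-1) = 1 := by rw [hr_def]; field_simp; ring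
    rw [this, Real.rpow_one]
  have hκr : κ * r = 1 + κ := by rw [hr_def]; field_simp
  have har : (q^κ) ^ r = q ^ (1+κ) := by
    rw [← Real.rpow_mul hq.le, hκr]
  have hbr : (p^κ) ^ r = p ^ (1+κ) := by
    rw [← Real.rpow_mul hp.le, hκr]
  have hpb : p * p^κ = p^(1+κ) := by rw [Real.rpow_add hp, Real.rpow_one]
  have hr2 : r = 1 + 1/κ := by rw [hr_def]; field_simp; ring
  rcases hne.lt_or_gt with h | h
  · have hba : p^κ < q^κ := Real.rpow_lt_rpow hp.le h hκ
    have hsl := (strictConvexOn_rpow hr).lt_slope_of_hasDerivAt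
      (Set.mem_Ici.2 hb.le) (Set.mem_Ici.2 ha.le) hba hderiv
    rw [slope_def_field, lt_div_iff₀ (sub_pos.2 hba)] at hsl
    rw [hbr1, har, hbr] at hsl
    have key : r * p * (q^κ - p^κ) = (1+1/κ)*(p*q^κ) - (1+1/κ)*p^(1+κ) := by
      rw [hr2, ← hpb]; ring
    have key2 : (1+1/κ) * p * q^κ = (1+1/κ)*(p*q^κ) := by ring
    linarith [hsl, key]
  · have hba : q^κ < p^κ := Real.rpow_lt_rpow hq.le h hκ
    have hsl := (strictConvexOn_rpow hr).slope_lt_of_hasDerivAt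
      (Set.mem_Ici.2 ha.le) (Set.mem_Ici.2 hb.le) hba hderiv
    rw [slope_def_field, div_lt_iff₀ (sub_pos.2 hba)] at hsl
    rw [hbr1, har, hbr] at hsl
    have key : r * p * (p^κ - q^κ) = (1+1/κ)*p^(1+κ) - (1+1/κ)*(p*q^κ) := by
      rw [hr2, ← hpb]; ring
    have key2 : (1+1/κ) * p * q^κ = (1+1/κ)*(p*q^κ) := by ring
    linarith [hsl, key]

lemma term_nonneg {κ p q : ℝ} (hκ : 0 < κ) (hp : 0 < p) (hq : 0 < q) :
    0 ≤ q ^ (1+κ) - (1 + 1/κ) * p * q ^ κ + (1/κ) * p ^ (1+κ) := by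
  rcases eq_or_ne p q with rfl | hne
  · exact le_of_eq (term_eq hκ hp).symm
  · exact (term_pos hκ hp hq hne).le

lemma dpd_self {κ p : ℝ} (hκ : 0 < κ) (hp : p ∈ Set.Ioo (0:ℝ) 1) : dpd κ p p = 0 := by
  simp only [dpd, Fintype.sum_bool, bern, if_true, if_false, Bool.false_eq_true]
  rw [term_eq hκ hp.1, term_eq hκ (by linarith [hp.2] : (0:ℝ) < 1 - p)]
  ring

lemma dpd_nonneg {κ p q : ℝ} (hκ : 0 < κ) (hp : p ∈ Set.Ioo (0:ℝ) 1)
    (hq : q ∈ Set.Ioo (0:ℝ) 1) : 0 ≤ dpd κ p q := by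
  simp only [dpd, Fintype.sum_bool, bern, if_true, if_false, Bool.false_eq_true]
  have h1 := term_nonneg hκ hp.1 hq.1
  have h2 := term_nonneg hκ (by linarith [hp.2] : (0:ℝ) < 1 - p)
    (by linarith [hq.2] : (0:ℝ) < 1 - q)
  linarith

lemma dpd_pos {κ p q : ℝ} (hκ : 0 < κ) (hp : p ∈ Set.Ioo (0:ℝ) 1)
    (hq : q ∈ Set.Ioo (0:ℝ) 1) (hne : p ≠ q) : 0 < dpd κ p q := by
  simp only [dpd, Fintype.sum_bool, bern, if_true, if_false, Bool.false_eq_true]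
  have h1 := term_pos hκ hp.1 hq.1 hne
  have h2 := term_nonneg hκ (by linarith [hp.2] : (0:ℝ) < 1 - p)
    (by linarith [hq.2] : (0:ℝ) < 1 - q)
  linarith

lemma dpd_bound {κ p q : ℝ} (hκ : 0 < κ) (hp : p ∈ Set.Ioo (0:ℝ) 1)
    (hq : q ∈ Set.Ioo (0:ℝ) 1) : ‖dpd κ p q‖ ≤ 4 + 4/κ := by
  have hb : ∀ x ∈ Set.Ioo (0:ℝ) 1, ∀ e : ℝ, 0 ≤ e → 0 ≤ x ^ e ∧ x ^ e ≤ 1 := by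
    intro x hx e he
    exact ⟨Real.rpow_nonneg hx.1.le e, Real.rpow_le_one hx.1.le hx.2.le he⟩
  have hq' : 1 - q ∈ Set.Ioo (0:ℝ) 1 := ⟨by linarith [hq.2], by linarith [hq.1]⟩
  have hp' : 1 - p ∈ Set.Ioo (0:ℝ) 1 := ⟨by linarith [hp.2], by linarith [hp.1]⟩
  have e1 : (0:ℝ) ≤ 1 + κ := by linarith
  obtain ⟨a1, a2⟩ := hb q hq (1+κ) e1
  obtain ⟨b1, b2⟩ := hb q hq κ hκ.le
  obtain ⟨c1, c2⟩ := hb p hp (1+κ) e1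
  obtain ⟨d1, d2⟩ := hb (1-q) hq' (1+κ) e1
  obtain ⟨f1, f2⟩ := hb (1-q) hq' κ hκ.le
  obtain ⟨g1, g2⟩ := hb (1-p) hp' (1+κ) e1
  simp only [dpd, Fintype.sum_bool, bern, if_true, if_false, Bool.false_eq_true,
    Real.norm_eq_abs]
  have hc0 : (0:ℝ) < 1/κ := by positivity
  set c : ℝ := 1/κ with hc
  have m0 : p * q^κ ≤ 1 := by nlinarith [hp.1, hp.2]
  have m1 : (1+c)*p*q^κ ≤ 1+c := by nlinarith
  have m2 : 0 ≤ (1+c)*p*q^κ :=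
    mul_nonneg (mul_nonneg (by linarith) hp.1.le) b1
  have n0 : (1-p) * (1-q)^κ ≤ 1 := by nlinarith [hp'.1, hp'.2]
  have n1 : (1+c)*(1-p)*(1-q)^κ ≤ 1+c := by nlinarith
  have n2 : 0 ≤ (1+c)*(1-p)*(1-q)^κ :=
    mul_nonneg (mul_nonneg (by linarith) hp'.1.le) f1
  have k1 : c * p^(1+κ) ≤ c := by nlinarith
  have k2 : 0 ≤ c * p^(1+κ) := mul_nonneg hc0.le c1
  have k3 : c * (1-p)^(1+κ) ≤ c := by nlinarith
  have k4 : 0 ≤ c * (1-p)^(1+κ) := mul_nonneg hc0.le g1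
  have h4c : (4:ℝ) + 4/κ = 4 + 4*c := by rw [hc]; ring
  rw [h4c, abs_le]
  constructor <;> linarith

/-- Fisher consistency: with `M(β,κ₀) = 𝔼[d_{κ₀}(f_{H⟨X,β₀⟩}, f_{H⟨X,β⟩})]`,
one has `M(β₀,κ₀) = 0`, `M(β,κ₀) ≥ 0` for all `β`, and `M(β,κ₀) > 0` whenever
`ℙ(⟨X, β - β₀⟩ = 0) < 1`. -/
theorem fisher_consistency {Ω : Type*} [MeasurableSpace Ω] (ℙ : Measure Ω)
    [IsProbabilityMeasure ℙ] [MeasurableSpace L2] [BorelSpace L2]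
    (κ₀ : ℝ) (hκ₀ : 0 < κ₀) (X : Ω → L2) (hX : Measurable X)
    (H : ℝ → ℝ) (hH : ∀ x, H x ∈ Set.Ioo (0 : ℝ) 1) (hmono : StrictMono H)
    (β₀ : L2) :
    (∫ ω, dpd κ₀ (H ⟪X ω, β₀⟫) (H ⟪X ω, β₀⟫) ∂ℙ) = 0 ∧
    (∀ β : L2, 0 ≤ ∫ ω, dpd κ₀ (H ⟪X ω, β₀⟫) (H ⟪X ω, β⟫) ∂ℙ) ∧
    (∀ β : L2, ℙ {ω | ⟪X ω, β - β₀⟫ = 0} < 1 →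
      0 < ∫ ω, dpd κ₀ (H ⟪X ω, β₀⟫) (H ⟪X ω, β⟫) ∂ℙ) := by
  have hinner : ∀ v : L2, Measurable fun ω => ⟪X ω, v⟫ :=
    fun v => (Continuous.inner continuous_id (continuous_const : Continuous fun _ : L2 => v)).measurable.comp hX
  have hHm : Measurable H := hmono.monotone.measurable
  have hm : ∀ β : L2, Measurable fun ω => dpd κ₀ (H ⟪X ω, β₀⟫) (H ⟪X ω, β⟫) := by
    intro β
    have h1 : Measurable fun ω => H ⟪X ω, β₀⟫ := hHm.comp (hinner β₀)
    have h2 : Measurable fun ω => H ⟪X ω, β⟫ := hHm.comp (hinner β)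
    simp only [dpd, Fintype.sum_bool, bern, if_true, if_false, Bool.false_eq_true]
    fun_prop
  have hint : ∀ β : L2, Integrable (fun ω => dpd κ₀ (H ⟪X ω, β₀⟫) (H ⟪X ω, β⟫)) ℙ := by
    intro β
    refine (integrable_const (4 + 4/κ₀)).mono' (hm β).aestronglyMeasurable
      (ae_of_all _ fun ω => ?_)
    exact dpd_bound hκ₀ (hH _) (hH _)
  refine ⟨?_, ?_, ?_⟩
  · have h1 : ∀ ω : Ω, dpd κ₀ (H ⟪X ω, β₀⟫) (H ⟪X ω, β₀⟫) = 0 :=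
      fun ω => dpd_self hκ₀ (hH _)
    simp [h1]
  · exact fun β => integral_nonneg fun ω => dpd_nonneg hκ₀ (hH _) (hH _)
  · intro β hlt
    have hsmeas : MeasurableSet {ω | ⟪X ω, β - β₀⟫ = (0:ℝ)} :=
      (hinner (β - β₀)) (measurableSet_singleton 0)
    have hcompl : 0 < ℙ {ω | ⟪X ω, β - β₀⟫ = (0:ℝ)}ᶜ := by
      rw [prob_compl_eq_one_sub hsmeas]
      exact tsub_pos_of_lt hlt
    rw [integral_pos_iff_support_of_nonneg
      (fun ω => dpd_nonneg hκ₀ (hH _) (hH _)) (hint β)]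
    refine lt_of_lt_of_le hcompl (measure_mono fun ω hω => ?_)
    simp only [Set.mem_compl_iff, Set.mem_setOf_eq] at hω
    rw [inner_sub_right] at hω
    have hne : H ⟪X ω, β₀⟫ ≠ H ⟪X ω, β⟫ :=
      fun h => hω (by rw [hmono.injective h]; ring)
    exact (dpd_pos hκ₀ (hH _) (hH _) hne).ne'


end
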